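/- Let E be a closed subset of the unit sphere S of C^n and suppose (E,d) ∈ Υ_s for some s < n, i.e. for all x ∈ E, 0 < R ≤ kR ≤ 1, the maximal number N(x,R,k) of R-separated points in B(x,kR) ∩ E satisfies N(x,R,k) ≤ C k^s. Then E satisfies Σ_s: there is C' so that σ(B(x,R) ∩ E_ε) ≤ C' R^s ε^{n-s} for all x ∈ S, R > 0, 0 < ε < R, where E_ε = {z ∈ S : d(z,E) < ε} and σ is normalized Lebesgue measure on S. -/

import Mathlib

open MeasureTheory
open scoped ENNReal

noncomputable def dNI {n : ℕ} (x y : EuclideanSpace ℂ (Fin n)) : ℝ :=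
  ‖(1 - (inner ℂ y x : ℂ))‖

/-- Nonisotropic distance from `z` to the set `E`. -/
noncomputable def dE {n : ℕ} (E : Set (EuclideanSpace ℂ (Fin n)))
    (z : EuclideanSpace ℂ (Fin n)) : ℝ :=
  sInf (dNI z '' E)

/-- The `d`-ball of center `x` and radius `r` inside the unit sphere. -/
def Sball {n : ℕ} (x : EuclideanSpace ℂ (Fin n)) (r : ℝ) :
    Set (EuclideanSpace ℂ (Fin n)) :=
  {z | ‖z‖ = 1 ∧ dNI x z < r}

section auxiliary

variable {n : ℕ}

lemma aux_inner_self_unit {x : EuclideanSpace ℂ (Fin n)} (hx : ‖x‖ = 1) :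
    (inner ℂ x x : ℂ) = 1 := by
  rw [inner_self_eq_norm_sq_to_K, hx]; norm_num

lemma aux_dNI_nonneg (x y : EuclideanSpace ℂ (Fin n)) : 0 ≤ dNI x y :=
  norm_nonneg _

lemma aux_dNI_self {x : EuclideanSpace ℂ (Fin n)} (hx : ‖x‖ = 1) : dNI x x = 0 := by
  simp [dNI, aux_inner_self_unit hx, hx]

lemma aux_dNI_symm (x y : EuclideanSpace ℂ (Fin n)) : dNI x y = dNI y x := by
  unfold dNI
  rw [← Complex.norm_conj]
  congr 1
  rw [map_sub, map_one, inner_conj_symm]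

lemma aux_dNI_le_two {x y : EuclideanSpace ℂ (Fin n)} (hx : ‖x‖ = 1) (hy : ‖y‖ = 1) :
    dNI x y ≤ 2 := by
  have h := norm_inner_le_norm (𝕜 := ℂ) y x
  rw [hx, hy] at h
  calc ‖1 - (inner ℂ y x : ℂ)‖ ≤ ‖(1:ℂ)‖ + ‖(inner ℂ y x : ℂ)‖ := by
        simpa using norm_sub_le 1 (inner ℂ y x : ℂ)
    _ ≤ 1 + 1 := by
        rw [norm_one]
        exact add_le_add le_rfl (by simpa using h)
    _ = 2 := by norm_num

lemma aux_dNI_le_dist {x y : EuclideanSpace ℂ (Fin n)} (hx : ‖x‖ = 1) :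
    dNI x y ≤ ‖x - y‖ := by
  have h1 : (1 : ℂ) - inner ℂ y x = inner (𝕜 := ℂ) (x - y) x := by
    rw [inner_sub_left, aux_inner_self_unit hx]
  have h2 := norm_inner_le_norm (𝕜 := ℂ) (x - y) x
  rw [hx, mul_one] at h2
  rw [dNI, h1]
  exact h2

lemma aux_proj_norm_sq {v c : EuclideanSpace ℂ (Fin n)} (hv : ‖v‖ = 1) (hc : ‖c‖ = 1) :
    ‖v - (inner ℂ c v : ℂ) • c‖^2 = 1 - ‖(inner ℂ c v : ℂ)‖^2 := by
  have h := @norm_sub_sq ℂ _ _ _ _ v ((inner ℂ c v : ℂ) • c)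
  rw [inner_smul_right, ← inner_conj_symm v c, Complex.mul_conj] at h
  rw [h, hv, norm_smul, hc, mul_one]
  simp [Complex.sq_norm]
  ring

lemma aux_one_sub_abs_sq_le {z : ℂ} (hz : ‖z‖ ≤ 1) :
    1 - ‖z‖^2 ≤ 2 * ‖1 - z‖ := by
  have h1 : (1:ℝ) - ‖z‖ ≤ ‖1 - z‖ := by
    simpa using norm_sub_norm_le (1:ℂ) z
  nlinarith [norm_nonneg z, norm_nonneg (1-z)]

lemma aux_dNI_quasi {a b c : EuclideanSpace ℂ (Fin n)}
    (ha : ‖a‖ = 1) (hb : ‖b‖ = 1) (hc : ‖c‖ = 1) :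
    dNI a b ≤ 4 * (dNI a c + dNI c b) := by
  set u : ℂ := 1 - inner ℂ b c with hu
  set v : ℂ := 1 - inner ℂ c a with hv
  set Pa : EuclideanSpace ℂ (Fin n) := a - (inner ℂ c a : ℂ) • c with hPa
  set Pb : EuclideanSpace ℂ (Fin n) := b - (inner ℂ c b : ℂ) • c with hPb
  have hcc : (inner ℂ c c : ℂ) = 1 := aux_inner_self_unit hc
  have key1 : (inner ℂ b a : ℂ) - (inner ℂ b c) * (inner ℂ c a) = inner ℂ Pb Pa := by
    simp only [hPa, hPb, inner_sub_left, inner_sub_right, inner_smul_left,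
      inner_smul_right, hcc, mul_one]
    rw [← inner_conj_symm c b]
    ring
  have hca1 : ‖(inner ℂ c a : ℂ)‖ ≤ 1 := by
    have h := norm_inner_le_norm (𝕜 := ℂ) c a
    rw [hc, ha] at h; simpa using h
  have key2a : ‖Pa‖^2 ≤ 2 * dNI a c := by
    rw [hPa, aux_proj_norm_sq ha hc]
    have h := aux_one_sub_abs_sq_le hca1
    simpa [dNI] using h
  have key2b : ‖Pb‖^2 ≤ 2 * dNI c b := by
    rw [hPb, aux_proj_norm_sq hb hc]
    have hbc1 : ‖(inner ℂ b c : ℂ)‖ ≤ 1 := by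
      have h := norm_inner_le_norm (𝕜 := ℂ) b c
      rw [hb, hc] at h; simpa using h
    have h := aux_one_sub_abs_sq_le hbc1
    have e : ‖(inner ℂ c b : ℂ)‖ = ‖(inner ℂ b c : ℂ)‖ := by
      rw [← inner_conj_symm b c, Complex.norm_conj]
    rw [e]
    simpa [dNI] using h
  have prod : ‖Pb‖ * ‖Pa‖ ≤ dNI a c + dNI c b := by
    nlinarith [sq_nonneg (‖Pa‖ - ‖Pb‖), norm_nonneg Pa, norm_nonneg Pb]
  have hid : (1:ℂ) - inner ℂ b a
      = (u + v - u*v) - ((inner ℂ b a : ℂ) - inner ℂ b c * inner ℂ c a) := by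
    rw [hu, hv]; ring
  have habs : dNI a b ≤ ‖u‖ + ‖v‖ + ‖u‖ * ‖v‖
      + ‖Pb‖ * ‖Pa‖ := by
    rw [dNI, hid, key1]
    calc ‖(u + v - u*v) - (inner ℂ Pb Pa : ℂ)‖
        ≤ ‖u + v - u*v‖ + ‖(inner ℂ Pb Pa : ℂ)‖ := by
          simpa using norm_sub_le (u + v - u*v) (inner ℂ Pb Pa : ℂ)
      _ ≤ (‖u‖ + ‖v‖ + ‖u‖ * ‖v‖)
          + ‖Pb‖ * ‖Pa‖ := by
          gcongr
          · calc ‖u + v - u*v‖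
                ≤ ‖u + v‖ + ‖u*v‖ := by
                  simpa using norm_sub_le (u+v) (u*v)
              _ ≤ ‖u‖ + ‖v‖ + ‖u‖ * ‖v‖ := by
                  rw [norm_mul]
                  exact add_le_add_left (norm_add_le u v) _
          · have h := norm_inner_le_norm (𝕜 := ℂ) Pb Pa
            simpa using h
  have hB2 : ‖u‖ ≤ 2 := by
    have := aux_dNI_le_two hc hb
    simpa [dNI, hu] using this
  have hA : dNI a c = ‖v‖ := rfl
  have hB : dNI c b = ‖u‖ := rfl
  rw [hA, hB] at prod ⊢
  have hvn := norm_nonneg v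
  nlinarith

lemma aux_sep_finite {ρ : ℝ} (hρ : 0 < ρ) (A : Set (EuclideanSpace ℂ (Fin n)))
    (hA : A ⊆ Metric.sphere 0 1)
    (hsep : ∀ p ∈ A, ∀ q ∈ A, p ≠ q → ρ ≤ dNI p q) : A.Finite := by
  obtain ⟨t, hts, htf, htc⟩ :=
    (isCompact_sphere (0 : EuclideanSpace ℂ (Fin n)) 1).finite_cover_balls
      (e := ρ/2) (by positivity)
  have hmem : ∀ a ∈ A, ∃ x ∈ t, a ∈ Metric.ball x (ρ/2) := by
    intro a ha
    have := htc (hA ha)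
    simpa using this
  classical
  choose! f hft hfb using hmem
  have hinj : Set.InjOn f A := by
    intro a ha b hb hfe
    by_contra hne
    have h1 : ρ ≤ dNI a b := hsep a ha b hb hne
    have hxa : ‖a‖ = 1 := by simpa using hA ha
    have h2 : dNI a b ≤ ‖a - b‖ := aux_dNI_le_dist hxa
    have h3 : dist a (f a) < ρ/2 := by simpa [Metric.mem_ball, dist_comm] using hfb a ha
    have h4 : dist b (f b) < ρ/2 := by simpa [Metric.mem_ball, dist_comm] using hfb b hb
    have h5 : dist a b < ρ := by
      calc dist a b ≤ dist a (f a) + dist (f b) b := by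
            rw [hfe]; exact dist_triangle a (f b) b
        _ < ρ/2 + ρ/2 := by rw [dist_comm (f b) b]; exact add_lt_add h3 h4
        _ = ρ := by ring
    rw [dist_eq_norm] at h5
    linarith
  exact Set.Finite.of_finite_image ((htf.subset (Set.image_subset_iff.2 hft)).subset
    (subset_refl _)) hinj

lemma aux_exists_net (A : Set (EuclideanSpace ℂ (Fin n))) (hA : A ⊆ Metric.sphere 0 1)
    {ρ : ℝ} (hρ : 0 < ρ) :
    ∃ T : Finset (EuclideanSpace ℂ (Fin n)), ↑T ⊆ A ∧
      (∀ p ∈ T, ∀ q ∈ T, p ≠ q → ρ ≤ dNI p q) ∧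
      ∀ a ∈ A, ∃ t ∈ T, dNI t a < ρ := by
  classical
  set S : Set (Set (EuclideanSpace ℂ (Fin n))) :=
    {B | B ⊆ A ∧ ∀ p ∈ B, ∀ q ∈ B, p ≠ q → ρ ≤ dNI p q} with hS
  have hchain : ∀ c ⊆ S, IsChain (· ⊆ ·) c → ∃ ub ∈ S, ∀ s ∈ c, s ⊆ ub := by
    intro c hcS hchain
    refine ⟨⋃₀ c, ⟨?_, ?_⟩, fun s hs => Set.subset_sUnion_of_mem hs⟩
    · exact Set.sUnion_subset fun s hs => (hcS hs).1
    · rintro p ⟨s1, hs1, hp⟩ q ⟨s2, hs2, hq⟩ hne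
      rcases hchain.total hs1 hs2 with h | h
      · exact (hcS hs2).2 p (h hp) q hq hne
      · exact (hcS hs1).2 p hp q (h hq) hne
  obtain ⟨M, hMS, hMmax⟩ := zorn_subset S hchain
  have hMfin : M.Finite := aux_sep_finite hρ M (hMS.1.trans hA) hMS.2
  refine ⟨hMfin.toFinset, ?_, ?_, ?_⟩
  · rw [Set.Finite.coe_toFinset]; exact hMS.1
  · intro p hp q hq hne
    exact hMS.2 p (hMfin.mem_toFinset.1 hp) q (hMfin.mem_toFinset.1 hq) hne
  · intro a ha
    by_contra hcon
    push_neg at hcon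
    have h : ∀ t ∈ M, ρ ≤ dNI t a := fun t ht => hcon t (hMfin.mem_toFinset.2 ht)
    have haunit : ‖a‖ = 1 := by simpa using hA ha
    have haM : a ∉ M := by
      intro haM
      have := h a haM
      rw [aux_dNI_self haunit] at this
      linarith
    have hins : insert a M ∈ S := by
      constructor
      · exact Set.insert_subset ha hMS.1
      · rintro p (rfl | hp) q (rfl | hq) hne
        · exact absurd rfl hne
        · rw [aux_dNI_symm]; exact h q hq
        · exact h p hp
        · exact hMS.2 p hp q hq hne
    have := hMmax hins (Set.subset_insert a M) (Set.mem_insert a M)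
    exact haM this

end auxiliary

theorem upsilon_implies_sigma (n : ℕ)
    [MeasurableSpace (EuclideanSpace ℂ (Fin n))]
    [BorelSpace (EuclideanSpace ℂ (Fin n))]
    (E : Set (EuclideanSpace ℂ (Fin n)))
    (hEclosed : IsClosed E) (hES : E ⊆ Metric.sphere 0 1) (hEne : E.Nonempty)
    (σ : Measure (EuclideanSpace ℂ (Fin n)))
    -- the normalized surface measure satisfies σ(B(x,r)) ≈ r^n :
    (c₀ C₀ : ℝ) (hc₀ : 0 < c₀) (hC₀ : 0 < C₀)
    (hσlow : ∀ x : EuclideanSpace ℂ (Fin n), ‖x‖ = 1 → ∀ r : ℝ, 0 < r → r ≤ 1 →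
      ENNReal.ofReal (c₀ * r ^ (n : ℝ)) ≤ σ (Sball x r))
    (hσup : ∀ x : EuclideanSpace ℂ (Fin n), ‖x‖ = 1 → ∀ r : ℝ, 0 < r →
      σ (Sball x r) ≤ ENNReal.ofReal (C₀ * r ^ (n : ℝ)))
    (s C : ℝ) (hs : s < n) (hC : 0 < C)
    -- (E,d) ∈ Υ_s :
    (hUps : ∀ x ∈ E, ∀ (R k : ℝ), 0 < R → 1 ≤ k → k * R ≤ 1 →
      ∀ T : Finset (EuclideanSpace ℂ (Fin n)),
        (↑T ⊆ {z ∈ E | dNI x z < k * R}) →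
        (∀ p ∈ T, ∀ q ∈ T, p ≠ q → R ≤ dNI p q) →
        (T.card : ℝ) ≤ C * k ^ s) :
    -- conclusion: E satisfies Σ_s
    ∃ C' > 0, ∀ x : EuclideanSpace ℂ (Fin n), ‖x‖ = 1 → ∀ R ε : ℝ, 0 < ε → ε < R →
      σ (Sball x R ∩ {z | ‖z‖ = 1 ∧ dE E z < ε}) ≤
        ENNReal.ofReal (C' * R ^ s * ε ^ ((n : ℝ) - s)) := by
  classical
  obtain ⟨x₀, hx₀E⟩ := hEne
  have hEunit : ∀ p ∈ E, ‖p‖ = 1 := fun p hp => by simpa using hES hp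
  have hx₀u : ‖x₀‖ = 1 := hEunit x₀ hx₀E
  -- basic consequence: 1 ≤ C * k ^ s for every k ≥ 1
  have hone : ∀ k : ℝ, 1 ≤ k → (1:ℝ) ≤ C * k ^ s := by
    intro k hk
    have hkpos : (0:ℝ) < k := lt_of_lt_of_le one_pos hk
    have hkk : k * (1/k) = 1 := by field_simp
    have h := hUps x₀ hx₀E (1/k) k (by positivity) hk (le_of_eq hkk)
      {x₀} ?_ ?_
    · simpa using h
    · intro z hz
      simp only [Finset.coe_singleton, Set.mem_singleton_iff] at hz
      subst hz
      refine ⟨hx₀E, ?_⟩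
      rw [aux_dNI_self hx₀u, hkk]
      norm_num
    · intro p hp q hq hne
      simp only [Finset.mem_singleton] at hp hq
      exact absurd (hp.trans hq.symm) hne
  have hC1 : (1:ℝ) ≤ C := by
    have := hone 1 le_rfl
    simpa [Real.one_rpow] using this
  have hs0 : 0 ≤ s := by
    by_contra hneg
    push_neg at hneg
    set k : ℝ := (2*C) ^ (-1/s) with hk
    have h2C : (1:ℝ) ≤ 2*C := by linarith
    have hexp : (0:ℝ) < -1/s := by
      rw [div_pos_iff]
      right
      constructor <;> linarith
    have hk1 : (1:ℝ) ≤ k := Real.one_le_rpow h2C (le_of_lt hexp)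
    have hks : k ^ s = (2*C)⁻¹ := by
      rw [hk, ← Real.rpow_mul (by linarith : (0:ℝ) ≤ 2*C)]
      rw [show (-1/s) * s = -1 from div_mul_cancel₀ (-1) (ne_of_lt hneg)]
      rw [Real.rpow_neg_one]
    have h := hone k hk1
    rw [hks] at h
    have h2 : C * (2*C)⁻¹ = 2⁻¹ := by
      rw [mul_inv, ← mul_assoc, mul_comm C, mul_assoc, mul_inv_cancel₀ (ne_of_gt hC), mul_one]
    rw [h2] at h
    norm_num at h
  have hns : (0:ℝ) ≤ (n:ℝ) - s := by linarith
  -- locating a nearby point of E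
  -- counting lemma
  have hcount : ∀ p ∈ E, ∀ ρ r : ℝ, 0 < ρ → ρ ≤ r → r ≤ 1 →
      ∃ T : Finset (EuclideanSpace ℂ (Fin n)), ↑T ⊆ {z ∈ E | dNI p z < r} ∧
        ((T.card:ℝ) ≤ C * (r/ρ) ^ s) ∧
        ∀ q ∈ {z ∈ E | dNI p z < r}, ∃ t ∈ T, dNI t q < ρ := by
    intro p hp ρ r hρ hρr hr1
    have hrpos : 0 < r := lt_of_lt_of_le hρ hρr
    have hAsub : {z ∈ E | dNI p z < r} ⊆ Metric.sphere 0 1 :=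
      fun z hz => hES hz.1
    obtain ⟨T, hT1, hT2, hT3⟩ := aux_exists_net {z ∈ E | dNI p z < r} hAsub hρ
    refine ⟨T, hT1, ?_, hT3⟩
    have hkeq : (r/ρ) * ρ = r := by field_simp
    have := hUps p hp ρ (r/ρ) hρ ((one_le_div hρ).2 hρr) (by rw [hkeq]; exact hr1) T
      (by rw [hkeq]; exact hT1) hT2
    exact this
  -- covering measure bound
  have hcover : ∀ (T : Finset (EuclideanSpace ℂ (Fin n))), ↑T ⊆ E →
      ∀ r : ℝ, 0 < r → ∀ A : Set (EuclideanSpace ℂ (Fin n)),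
      A ⊆ ⋃ t ∈ T, Sball t r → ∀ N : ℝ, (T.card : ℝ) ≤ N →
      σ A ≤ ENNReal.ofReal (N * (C₀ * r ^ (n:ℝ))) := by
    intro T hTE r hr A hA N hN
    calc σ A ≤ σ (⋃ t ∈ T, Sball t r) := measure_mono hA
      _ ≤ ∑ t ∈ T, σ (Sball t r) := measure_biUnion_finset_le T _
      _ ≤ ∑ t' ∈ T, ENNReal.ofReal (C₀ * r ^ (n:ℝ)) := by
          refine Finset.sum_le_sum fun t ht => ?_
          exact hσup t (hEunit t (hTE ht)) r hr
      _ = (T.card : ℝ≥0∞) * ENNReal.ofReal (C₀ * r ^ (n:ℝ)) := by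
          rw [Finset.sum_const, nsmul_eq_mul]
      _ = ENNReal.ofReal ((T.card : ℝ) * (C₀ * r ^ (n:ℝ))) := by
          rw [ENNReal.ofReal_mul (Nat.cast_nonneg _), ENNReal.ofReal_natCast]
      _ ≤ ENNReal.ofReal (N * (C₀ * r ^ (n:ℝ))) := by
          apply ENNReal.ofReal_le_ofReal
          apply mul_le_mul_of_nonneg_right hN
          positivity
  -- global net of the sphere
  obtain ⟨F, hFs, hFfin, hFc⟩ :=
    (isCompact_sphere (0 : EuclideanSpace ℂ (Fin n)) 1).finite_cover_balls
      (e := (64:ℝ)⁻¹) (by norm_num)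
  set NF : ℝ := (hFfin.toFinset.card : ℝ) with hNF
  have hNF0 : 0 ≤ NF := Nat.cast_nonneg _
  -- the three constants
  set C₁ : ℝ := C * C₀ * (64:ℝ) ^ s * (8:ℝ) ^ (n:ℝ) with hC₁
  set C₂ : ℝ := (NF + 1) * C * C₀ * ((1:ℝ)/8) ^ s * (8:ℝ) ^ (n:ℝ) * (64:ℝ) ^ (n:ℝ) with hC₂
  set C₃ : ℝ := C₀ * (3:ℝ) ^ (n:ℝ) * (64:ℝ) ^ (n:ℝ) * (128:ℝ) ^ (n:ℝ) with hC₃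
  have hC₁pos : 0 < C₁ := by positivity
  have hC₂pos : 0 < C₂ := by positivity
  have hC₃pos : 0 < C₃ := by positivity
  refine ⟨C₁ + C₂ + C₃, by positivity, ?_⟩
  intro x hx R ε hε hεR
  have hR : 0 < R := hε.trans hεR
  have hdEfind : ∀ z : EuclideanSpace ℂ (Fin n), dE E z < ε → ∃ p ∈ E, dNI p z < ε := by
    intro z hz
    rw [dE] at hz
    have hbb : BddBelow (dNI z '' E) := by
      refine ⟨0, ?_⟩
      rintro y ⟨p, _, rfl⟩
      exact aux_dNI_nonneg z p
    have hne : (dNI z '' E).Nonempty := ⟨dNI z x₀, ⟨x₀, hx₀E, rfl⟩⟩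
    obtain ⟨y, ⟨p, hpE, rfl⟩, hy⟩ := (csInf_lt_iff hbb hne).1 hz
    exact ⟨p, hpE, by rwa [aux_dNI_symm]⟩
  have hRεpos : (0:ℝ) ≤ R ^ s * ε ^ ((n:ℝ) - s) := by positivity
  -- final reduction: it suffices to bound by each Cᵢ
  have hfinal : ∀ K : ℝ, K ≤ C₁ + C₂ + C₃ →
      σ (Sball x R ∩ {z | ‖z‖ = 1 ∧ dE E z < ε}) ≤
        ENNReal.ofReal (K * (R ^ s * ε ^ ((n:ℝ) - s))) →
      σ (Sball x R ∩ {z | ‖z‖ = 1 ∧ dE E z < ε}) ≤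
        ENNReal.ofReal ((C₁ + C₂ + C₃) * R ^ s * ε ^ ((n:ℝ) - s)) := by
    intro K hK h
    refine h.trans (ENNReal.ofReal_le_ofReal ?_)
    rw [mul_assoc]
    exact mul_le_mul_of_nonneg_right hK hRεpos
  by_cases hR64 : 64 * R ≤ 1
  · -- small R case
    by_cases hNE : (Sball x R ∩ {z | ‖z‖ = 1 ∧ dE E z < ε}).Nonempty
    · obtain ⟨z, ⟨hz1, hzR⟩, _, hzE⟩ := hNE
      obtain ⟨p, hpE, hpz⟩ := hdEfind z hzE
      have hpu : ‖p‖ = 1 := hEunit p hpE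
      obtain ⟨T, hT1, hT2, hT3⟩ := hcount p hpE ε (64*R) hε
        (by linarith) hR64
      have hcov : Sball x R ∩ {z | ‖z‖ = 1 ∧ dE E z < ε} ⊆ ⋃ t ∈ T, Sball t (8*ε) := by
        rintro w ⟨⟨hw1, hwx⟩, _, hwE⟩
        obtain ⟨q, hqE, hqw⟩ := hdEfind w hwE
        have hqu : ‖q‖ = 1 := hEunit q hqE
        have hq64 : dNI p q < 64 * R := by
          have e1 : dNI p q ≤ 4 * (dNI p x + dNI x q) := aux_dNI_quasi hpu hqu hx
          have e2 : dNI p x ≤ 4 * (dNI p z + dNI z x) := aux_dNI_quasi hpu hx hz1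
          have e3 : dNI x q ≤ 4 * (dNI x w + dNI w q) := aux_dNI_quasi hx hqu hw1
          have e4 : dNI z x = dNI x z := aux_dNI_symm z x
          have e5 : dNI w q = dNI q w := aux_dNI_symm w q
          rw [e4] at e2; rw [e5] at e3
          linarith [aux_dNI_nonneg p z, aux_dNI_nonneg x z, aux_dNI_nonneg x w,
            aux_dNI_nonneg q w]
        obtain ⟨t, htT, htq⟩ := hT3 q ⟨hqE, hq64⟩
        have htu : ‖t‖ = 1 := hEunit t (hT1 htT).1
        refine Set.mem_iUnion₂.2 ⟨t, htT, hw1, ?_⟩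
        have e6 : dNI t w ≤ 4 * (dNI t q + dNI q w) := aux_dNI_quasi htu hw1 hqu
        linarith [aux_dNI_nonneg t q, aux_dNI_nonneg q w]
      have hTsubE : ↑T ⊆ E := fun t ht => (hT1 ht).1
      have hσb := hcover T hTsubE (8*ε) (by positivity) _ hcov _ hT2
      apply hfinal (C * ((64*R)/ε) ^ s * (C₀ * (8*ε) ^ (n:ℝ)) / (R ^ s * ε ^ ((n:ℝ)-s)))
        ?_ ?_
      · -- show the quotient is ≤ C₁
        have heq : C * ((64*R)/ε) ^ s * (C₀ * (8*ε) ^ (n:ℝ))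
            = C₁ * (R ^ s * ε ^ ((n:ℝ) - s)) := by
          rw [Real.div_rpow (by positivity) (le_of_lt hε),
            Real.mul_rpow (by norm_num) (le_of_lt hR),
            Real.mul_rpow (by norm_num) (le_of_lt hε),
            Real.rpow_sub hε, hC₁]
          field_simp
        rw [div_le_iff₀ (by positivity), heq]
        have hle : C₁ ≤ C₁ + C₂ + C₃ := by linarith
        exact mul_le_mul_of_nonneg_right hle hRεpos
      · rw [div_mul_cancel₀]
        · exact hσb.trans (ENNReal.ofReal_le_ofReal (le_of_eq (by ring)))
        · positivity
    · rw [Set.not_nonempty_iff_eq_empty.1 hNE, measure_empty]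
      exact zero_le
  · -- large R case
    push_neg at hR64
    have hRinv : (64:ℝ)⁻¹ ≤ R := by
      rw [inv_le_iff_one_le_mul₀ (by norm_num)]
      linarith
    have hRs : (64:ℝ) ^ (-(n:ℝ)) ≤ R ^ s := by
      have h1 : ((64:ℝ)⁻¹) ^ s ≤ R ^ s :=
        Real.rpow_le_rpow (by norm_num) hRinv hs0
      have h2 : ((64:ℝ)⁻¹) ^ s = (64:ℝ) ^ (-s) := by
        rw [← Real.rpow_neg_one, ← Real.rpow_mul (by norm_num), neg_one_mul]
      have h3 : (64:ℝ) ^ (-(n:ℝ)) ≤ (64:ℝ) ^ (-s) :=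
        Real.rpow_le_rpow_of_exponent_le (by norm_num) (by linarith)
      calc (64:ℝ) ^ (-(n:ℝ)) ≤ (64:ℝ) ^ (-s) := h3
        _ = ((64:ℝ)⁻¹) ^ s := h2.symm
        _ ≤ R ^ s := h1
    by_cases hε128 : ε < (128:ℝ)⁻¹
    · -- large R, small ε : global covering
      have hTcex : ∀ c : EuclideanSpace ℂ (Fin n), ‖c‖ = 1 →
          ∃ Tc : Finset (EuclideanSpace ℂ (Fin n)), ↑Tc ⊆ E ∧
            ((Tc.card:ℝ) ≤ C * (((1:ℝ)/8)/ε) ^ s) ∧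
            ∀ q ∈ E, dNI c q < (64:ℝ)⁻¹ → ∃ t ∈ Tc, dNI t q < ε := by
        intro c hcu
        by_cases hc : ∃ m ∈ E, dNI c m < (64:ℝ)⁻¹
        · obtain ⟨m, hmE, hmc⟩ := hc
          have hmu : ‖m‖ = 1 := hEunit m hmE
          obtain ⟨T, hT1, hT2, hT3⟩ := hcount m hmE ε ((1:ℝ)/8) hε
            (by linarith [hε128]) (by norm_num)
          refine ⟨T, fun t ht => (hT1 ht).1, hT2, ?_⟩
          intro q hqE hqc
          have hqu : ‖q‖ = 1 := hEunit q hqE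
          have hq8 : dNI m q ≤ 4 * (dNI m c + dNI c q) := aux_dNI_quasi hmu hqu hcu
          have hmq : dNI m q < (1:ℝ)/8 := by
            have e := aux_dNI_symm m c
            rw [e] at hq8
            linarith [aux_dNI_nonneg c m, aux_dNI_nonneg c q]
          exact hT3 q ⟨hqE, hmq⟩
        · push_neg at hc
          refine ⟨∅, by simp, by simp; positivity, ?_⟩
          intro q hqE hqc
          exact absurd hqc (not_lt.2 (hc q hqE))
      choose! Tc hTc1 hTc2 hTc3 using hTcex
      set Ftf := hFfin.toFinset with hFtf
      have hFunit : ∀ c ∈ Ftf, ‖c‖ = 1 := by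
        intro c hc
        have : c ∈ F := hFfin.mem_toFinset.1 hc
        simpa using hFs this
      set T : Finset (EuclideanSpace ℂ (Fin n)) := Ftf.biUnion Tc with hT
      have hTE : ↑T ⊆ E := by
        intro t ht
        obtain ⟨c, hcF, htc⟩ := Finset.mem_biUnion.1 ht
        exact hTc1 c (hFunit c hcF) htc
      set N : ℝ := NF * (C * (((1:ℝ)/8)/ε) ^ s) with hN
      have hcard : (T.card : ℝ) ≤ N := by
        have h1 : T.card ≤ ∑ c ∈ Ftf, (Tc c).card := Finset.card_biUnion_le
        have h2 : ((∑ c ∈ Ftf, (Tc c).card : ℕ) : ℝ) = ∑ c ∈ Ftf, ((Tc c).card : ℝ) := by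
          push_cast
          rfl
        have h3 : ∑ c ∈ Ftf, ((Tc c).card : ℝ) ≤ ∑ _c ∈ Ftf, (C * (((1:ℝ)/8)/ε) ^ s) :=
          Finset.sum_le_sum fun c hc => hTc2 c (hFunit c hc)
        have h4 : ∑ _c ∈ Ftf, (C * (((1:ℝ)/8)/ε) ^ s) = N := by
          rw [Finset.sum_const, nsmul_eq_mul, hN, hNF]
        calc (T.card : ℝ) ≤ ((∑ c ∈ Ftf, (Tc c).card : ℕ) : ℝ) := Nat.cast_le.2 h1
          _ = ∑ c ∈ Ftf, ((Tc c).card : ℝ) := h2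
          _ ≤ ∑ _c ∈ Ftf, (C * (((1:ℝ)/8)/ε) ^ s) := h3
          _ = N := h4
      have hcov : Sball x R ∩ {z | ‖z‖ = 1 ∧ dE E z < ε} ⊆ ⋃ t ∈ T, Sball t (8*ε) := by
        rintro w ⟨⟨hw1, _⟩, _, hwE⟩
        obtain ⟨q, hqE, hqw⟩ := hdEfind w hwE
        have hqu : ‖q‖ = 1 := hEunit q hqE
        have hqs : q ∈ Metric.sphere (0 : EuclideanSpace ℂ (Fin n)) 1 := by
          simp [hqu]
        obtain ⟨c, hcF, hqc⟩ := Set.mem_iUnion₂.1 (hFc hqs)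
        have hcu : ‖c‖ = 1 := by simpa using hFs hcF
        have hdcq : dNI c q < (64:ℝ)⁻¹ := by
          have h1 : dNI c q ≤ ‖c - q‖ := aux_dNI_le_dist hcu
          have h2 : dist q c < (64:ℝ)⁻¹ := Metric.mem_ball.1 hqc
          rw [dist_comm, dist_eq_norm] at h2
          linarith
        obtain ⟨t, htTc, htq⟩ := hTc3 c hcu q hqE hdcq
        have htT : t ∈ T := Finset.mem_biUnion.2 ⟨c, hFfin.mem_toFinset.2 hcF, htTc⟩
        have htu : ‖t‖ = 1 := hEunit t (hTc1 c hcu htTc)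
        refine Set.mem_iUnion₂.2 ⟨t, htT, hw1, ?_⟩
        have e6 : dNI t w ≤ 4 * (dNI t q + dNI q w) := aux_dNI_quasi htu hw1 hqu
        linarith [aux_dNI_nonneg t q, aux_dNI_nonneg q w]
      have hσb := hcover T hTE (8*ε) (by positivity) _ hcov N hcard
      set K' : ℝ := NF * C * C₀ * ((1:ℝ)/8) ^ s * (8:ℝ) ^ (n:ℝ) with hK'
      apply hfinal (N * (C₀ * (8*ε) ^ (n:ℝ)) / (R ^ s * ε ^ ((n:ℝ)-s))) ?_ ?_
      · have heq : N * (C₀ * (8*ε) ^ (n:ℝ)) = K' * ε ^ ((n:ℝ) - s) := by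
          rw [hN, hK', Real.div_rpow (by norm_num) (le_of_lt hε),
            Real.mul_rpow (by norm_num) (le_of_lt hε),
            Real.rpow_sub hε]
          field_simp
        rw [div_le_iff₀ (by positivity), heq]
        have h64one : (1:ℝ) ≤ (64:ℝ) ^ (n:ℝ) * R ^ s := by
          have he : (64:ℝ) ^ (n:ℝ) * (64:ℝ) ^ (-(n:ℝ)) = 1 := by
            rw [← Real.rpow_add (by norm_num)]
            simp
          calc (1:ℝ) = (64:ℝ) ^ (n:ℝ) * (64:ℝ) ^ (-(n:ℝ)) := he.symm
            _ ≤ (64:ℝ) ^ (n:ℝ) * R ^ s :=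
                mul_le_mul_of_nonneg_left hRs (by positivity)
        have hK'0 : 0 ≤ K' := by
          rw [hK']
          positivity
        calc K' * ε ^ ((n:ℝ) - s)
            ≤ K' * (((64:ℝ) ^ (n:ℝ) * R ^ s) * ε ^ ((n:ℝ) - s)) := by
              apply mul_le_mul_of_nonneg_left _ hK'0
              exact le_mul_of_one_le_left (by positivity) h64one
          _ = (K' * (64:ℝ) ^ (n:ℝ)) * (R ^ s * ε ^ ((n:ℝ) - s)) := by ring
          _ ≤ C₂ * (R ^ s * ε ^ ((n:ℝ) - s)) := by
              apply mul_le_mul_of_nonneg_right _ hRεpos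
              rw [hK', hC₂]
              have hNF1 : NF ≤ NF + 1 := by linarith
              gcongr <;> linarith
          _ ≤ (C₁ + C₂ + C₃) * (R ^ s * ε ^ ((n:ℝ) - s)) := by
              apply mul_le_mul_of_nonneg_right _ hRεpos
              linarith
      · rw [div_mul_cancel₀]
        · exact hσb.trans (ENNReal.ofReal_le_ofReal (le_of_eq (by ring)))
        · positivity
    · -- large R, large ε : trivial bound
      push_neg at hε128
      have hεs : (128:ℝ) ^ (-(n:ℝ)) ≤ ε ^ ((n:ℝ) - s) := by
        have h1 : ((128:ℝ)⁻¹) ^ ((n:ℝ)-s) ≤ ε ^ ((n:ℝ)-s) :=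
          Real.rpow_le_rpow (by norm_num) hε128 hns
        have h2 : ((128:ℝ)⁻¹) ^ ((n:ℝ)-s) = (128:ℝ) ^ (-((n:ℝ)-s)) := by
          rw [← Real.rpow_neg_one, ← Real.rpow_mul (by norm_num), neg_one_mul]
        have h3 : (128:ℝ) ^ (-(n:ℝ)) ≤ (128:ℝ) ^ (-((n:ℝ)-s)) :=
          Real.rpow_le_rpow_of_exponent_le (by norm_num) (by linarith)
        calc (128:ℝ) ^ (-(n:ℝ)) ≤ (128:ℝ) ^ (-((n:ℝ)-s)) := h3
          _ = ((128:ℝ)⁻¹) ^ ((n:ℝ)-s) := h2.symm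
          _ ≤ ε ^ ((n:ℝ)-s) := h1
      have hsub : Sball x R ∩ {z | ‖z‖ = 1 ∧ dE E z < ε} ⊆ Sball x 3 := by
        rintro w ⟨⟨hw1, _⟩, _, _⟩
        exact ⟨hw1, lt_of_le_of_lt (aux_dNI_le_two hx hw1) (by norm_num)⟩
      have hσb : σ (Sball x R ∩ {z | ‖z‖ = 1 ∧ dE E z < ε}) ≤
          ENNReal.ofReal (C₀ * (3:ℝ) ^ (n:ℝ)) :=
        (measure_mono hsub).trans (hσup x hx 3 (by norm_num))
      apply hfinal C₃ (by linarith)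
      refine hσb.trans (ENNReal.ofReal_le_ofReal ?_)
      have key : C₀ * (3:ℝ) ^ (n:ℝ) = C₃ * ((64:ℝ) ^ (-(n:ℝ)) * (128:ℝ) ^ (-(n:ℝ))) := by
        rw [hC₃, Real.rpow_neg (by norm_num : (0:ℝ) ≤ 64),
          Real.rpow_neg (by norm_num : (0:ℝ) ≤ 128)]
        have h64 : (64:ℝ) ^ (n:ℝ) ≠ 0 := by positivity
        have h128 : (128:ℝ) ^ (n:ℝ) ≠ 0 := by positivity
        field_simp
      rw [key]
      exact mul_le_mul_of_nonneg_left
        (mul_le_mul hRs hεs (by positivity) (by positivity)) (le_of_lt hC₃pos)
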